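/- (Aubin–Nitsche for Wentzell boundary conditions.) Assume the H²-regularity condition: for all g_Ω ∈ L²(Ω), g_Γ ∈ H^{1/2}(Γ), the weak solution φ of −Δφ = g_Ω in Ω, ∂_ν φ + κφ = g_Γ on Γ is in H²(Ω) with ‖φ‖²_{H²(Ω)} ≤ C₂(‖g_Ω‖²_{L²(Ω)} + ‖g_Γ‖²_{H^{1/2}(Γ)}). Assume also the first-order energy-norm Ritz error bound ‖w − R_h w‖ ≤ C h ‖w‖_{H²(Ω)}. Then the Ritz projection for the bilinear form a(u,v) = ∫_Ω ∇u·∇v + κ∫_Γ(γu)(γv), κ > 0, satisfies ‖u − R_h u‖²_{L²(Ω)} + μ‖γ(u − R_h u)‖²_{H^{-1/2}(Γ)} ≤ C h⁴ ‖u‖²_{H²(Ω)} for all u ∈ H²(Ω). -/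
import Mathlib

private lemma bilin_cs {V : Type*} [AddCommGroup V] [Module ℝ V]
    (a : V →ₗ[ℝ] V →ₗ[ℝ] ℝ) (hsymm : ∀ v w, a v w = a w v)
    (hpos : ∀ v, 0 ≤ a v v) (x y : V) :
    (a x y) ^ 2 ≤ a x x * a y y := by
  have key : ∀ t : ℝ, 0 ≤ a y y * (t * t) + (2 * a x y) * t + a x x := by
    intro t
    have h := hpos (x + t • y)
    have hexp : a (x + t • y) (x + t • y)
        = a y y * (t * t) + (2 * a x y) * t + a x x := by
      simp only [map_add, map_smul, LinearMap.add_apply, LinearMap.smul_apply,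
        smul_eq_mul]
      rw [hsymm y x]; ring
    rw [hexp] at h; exact h
  have hd := discrim_le_zero key
  have hd' : (2 * a x y) ^ 2 - 4 * a y y * a x x ≤ 0 := hd
  nlinarith [hd']

/-- Aubin–Nitsche duality argument for the Ritz projection with Wentzell boundary
conditions.  Here `V` plays the role of `H¹(Ω)`, `a` is the elliptic form
`a(u,v) = ∫_Ω ∇u·∇v + κ∫_Γ (γu)(γv)`, `LΩ` is the `L²(Ω)` inner product,
`Sm` the `H^{-1/2}(Γ)` pairing `(γu, γv)_{H^{-1/2}(Γ)}`, and `nH2` the `H²(Ω)`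
norm.  The `H²`-regularity condition is expressed in the form used in the proof:
for every `g` the dual problem `a(φ,v) = (g,v)_{L²(Ω)} + μ(γg, γv)_{H^{-1/2}(Γ)}`
has a solution `φ` with `‖φ‖²_{H²(Ω)} ≤ C₂(‖g‖²_{L²(Ω)} + μ²‖γg‖²_{H^{-1/2}(Γ)})`.
Conclusion: `‖u − R_h u‖²_{L²(Ω)} + μ‖γ(u − R_h u)‖²_{H^{-1/2}(Γ)} ≤ C' h⁴ ‖u‖²_{H²(Ω)}`. -/
theorem ritz_second_order_wentzell
    {V : Type*} [AddCommGroup V] [Module ℝ V]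
    (a LΩ Sm : V →ₗ[ℝ] V →ₗ[ℝ] ℝ)
    (ha_symm : ∀ v w, a v w = a w v) (ha_pos : ∀ v, 0 ≤ a v v)
    (hLΩ_symm : ∀ v w, LΩ v w = LΩ w v) (hLΩ_pos : ∀ v, 0 ≤ LΩ v v)
    (hSm_symm : ∀ v w, Sm v w = Sm w v) (hSm_pos : ∀ v, 0 ≤ Sm v v)
    (κ μ C₁ C₂ : ℝ) (hκ : 0 < κ) (hμ : 0 < μ) (hC₁ : 0 < C₁) (hC₂ : 0 < C₂)
    (nH2 : V → ℝ)
    -- the `H²`-regularity condition for the dual problem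
    (hreg : ∀ g : V, ∃ φ : V,
      (∀ v : V, a φ v = LΩ g v + μ * Sm g v) ∧
      (nH2 φ) ^ 2 ≤ C₂ * (LΩ g g + μ ^ 2 * Sm g g)) :
    ∃ C' > 0, ∀ h > (0:ℝ), ∀ (Vh : Submodule ℝ V) (Rh : V → V),
      -- `R_h` is the Ritz projection onto `V_h` (Galerkin orthogonality)
      (∀ w, Rh w ∈ Vh ∧ ∀ vh ∈ Vh, a (Rh w) vh = a w vh) →
      -- first-order Ritz error bound in the energy norm
      (∀ w : V, Real.sqrt (a (w - Rh w) (w - Rh w)) ≤ C₁ * h * nH2 w) →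
      ∀ u : V,
        LΩ (u - Rh u) (u - Rh u) + μ * Sm (u - Rh u) (u - Rh u) ≤
          C' * h ^ 4 * (nH2 u) ^ 2 := by
  have hM : (0:ℝ) < max 1 μ := lt_of_lt_of_le one_pos (le_max_left 1 μ)
  refine ⟨C₁ ^ 4 * C₂ * max 1 μ,
    mul_pos (mul_pos (pow_pos hC₁ 4) hC₂) hM, ?_⟩
  intro h hh Vh Rh hRitz hErr u
  set e := u - Rh u with he
  obtain ⟨φ, hφ1, hφ2⟩ := hreg e
  set d := φ - Rh φ with hd
  -- Galerkin orthogonality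
  have hGal : ∀ vh ∈ Vh, a e vh = 0 := by
    intro vh hvh
    have h2 := (hRitz u).2 vh hvh
    simp only [he, map_sub, LinearMap.sub_apply]
    linarith
  -- the quantity to bound
  set X := LΩ e e + μ * Sm e e with hX
  have hXnn : 0 ≤ X := add_nonneg (hLΩ_pos e) (mul_nonneg hμ.le (hSm_pos e))
  -- duality identity
  have hid : X = a e d := by
    have h1 : a φ e = X := hφ1 e
    have h2 : a e (Rh φ) = 0 := hGal _ (hRitz φ).1
    rw [hd, map_sub, h2, sub_zero, ha_symm e φ, h1]
  -- nonnegativity of the H² norms involved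
  have hnu : 0 ≤ nH2 u := by
    have := le_trans (Real.sqrt_nonneg _) (hErr u)
    nlinarith [mul_pos hC₁ hh]
  have hnφ : 0 ≤ nH2 φ := by
    have := le_trans (Real.sqrt_nonneg _) (hErr φ)
    nlinarith [mul_pos hC₁ hh]
  -- Cauchy–Schwarz for `a`
  have hEd : a e d ≤ Real.sqrt (a e e) * Real.sqrt (a d d) :=
    calc a e d ≤ |a e d| := le_abs_self _
      _ = Real.sqrt ((a e d) ^ 2) := (Real.sqrt_sq_eq_abs _).symm
      _ ≤ Real.sqrt (a e e * a d d) :=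
          Real.sqrt_le_sqrt (bilin_cs a ha_symm ha_pos e d)
      _ = Real.sqrt (a e e) * Real.sqrt (a d d) :=
          Real.sqrt_mul (ha_pos e) _
  have h1 : Real.sqrt (a e e) ≤ C₁ * h * nH2 u := hErr u
  have h2 : Real.sqrt (a d d) ≤ C₁ * h * nH2 φ := hErr φ
  have hA : X ≤ (C₁ * h * nH2 u) * (C₁ * h * nH2 φ) := by
    rw [hid]
    exact hEd.trans (mul_le_mul h1 h2 (Real.sqrt_nonneg _)
      (by positivity))
  -- bound `LΩ e e + μ² Sm e e` by `max 1 μ * X`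
  have hbound : LΩ e e + μ ^ 2 * Sm e e ≤ max 1 μ * X := by
    have hm1 : (1:ℝ) ≤ max 1 μ := le_max_left 1 μ
    have hm2 : μ ≤ max 1 μ := le_max_right 1 μ
    have hL := hLΩ_pos e
    have hS := hSm_pos e
    rw [hX]
    nlinarith [mul_le_mul_of_nonneg_right hm2 (mul_nonneg hμ.le hS)]
  have hφsq : (nH2 φ) ^ 2 ≤ C₂ * (max 1 μ) * X := by
    calc (nH2 φ) ^ 2 ≤ C₂ * (LΩ e e + μ ^ 2 * Sm e e) := hφ2
      _ ≤ C₂ * (max 1 μ * X) := mul_le_mul_of_nonneg_left hbound hC₂.le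
      _ = C₂ * (max 1 μ) * X := by ring
  -- square and conclude
  have hXsq : X ^ 2 ≤ ((C₁ * h * nH2 u) * (C₁ * h * nH2 φ)) ^ 2 :=
    pow_le_pow_left₀ hXnn hA 2
  have hkey : X ^ 2 ≤ (C₁ ^ 4 * C₂ * max 1 μ * h ^ 4 * (nH2 u) ^ 2) * X := by
    calc X ^ 2 ≤ ((C₁ * h * nH2 u) * (C₁ * h * nH2 φ)) ^ 2 := hXsq
      _ = (C₁ * h) ^ 4 * (nH2 u) ^ 2 * (nH2 φ) ^ 2 := by ring
      _ ≤ (C₁ * h) ^ 4 * (nH2 u) ^ 2 * (C₂ * (max 1 μ) * X) := by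
          apply mul_le_mul_of_nonneg_left hφsq (by positivity)
      _ = (C₁ ^ 4 * C₂ * max 1 μ * h ^ 4 * (nH2 u) ^ 2) * X := by ring
  rcases hXnn.lt_or_eq with hXpos | hXzero
  · have := le_of_mul_le_mul_right (by nlinarith [hkey] : X * X ≤ (C₁ ^ 4 * C₂ * max 1 μ * h ^ 4 * (nH2 u) ^ 2) * X) hXpos
    exact this
  · rw [← hXzero]
    positivity
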